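/- Let ξ satisfy the curve condition, let 0 < r₀ < r̃₀, and assume the function x ↦ s(x) is differentiable on Γ_{r₀} \ Γ. Then for every x ∈ Γ_{r₀} \ Γ, ∇s(x) = ξ'(s(x)) / (1 − (x − ξ(s(x))) · ξ''(s(x))). -/

import Mathlib

open scoped RealInnerProductSpace
open Filter Topology Set

/-- The Laplacian of `f : ℝⁿ → ℝ`: the sum of the second derivatives along the
standard orthonormal coordinate directions. -/
noncomputable def lap {n : ℕ} (f : EuclideanSpace ℝ (Fin n) → ℝ)
    (x : EuclideanSpace ℝ (Fin n)) : ℝ :=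
  ∑ i : Fin n, iteratedFDeriv ℝ 2 f x ![EuclideanSpace.single i 1, EuclideanSpace.single i 1]

/-- `m_* = 0` if `n = 2` and `(n-3)/(n-1)` if `n ≥ 3`. -/
noncomputable def mstar (n : ℕ) : ℝ := if n = 2 then 0 else ((n : ℝ) - 3) / ((n : ℝ) - 1)

theorem stmt_7 (n : ℕ) (hn : 2 ≤ n)
    (ξ : ℝ → EuclideanSpace ℝ (Fin n))
    (hξC3 : ContDiff ℝ 3 ξ) (hξinj : Function.Injective ξ)
    (hξ1 : ∀ σ : ℝ, ‖deriv ξ σ‖ = 1)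
    (K : ℝ) (hK : 1 < K)
    (hξ2 : ∀ σ : ℝ, ‖deriv (deriv ξ) σ‖ ≤ K)
    (hξ3 : ∀ σ : ℝ, ‖deriv (deriv (deriv ξ)) σ‖ ≤ K)
    (r : EuclideanSpace ℝ (Fin n) → ℝ)
    (hrdef : ∀ x, r x = Metric.infDist x (Set.range ξ))
    (rt0 : ℝ) (hrt0 : 0 < rt0) (hrt0' : rt0 < (2 * K)⁻¹)
    (s : EuclideanSpace ℝ (Fin n) → ℝ)
    (hsdef : ∀ x, r x < rt0 →
      r x = ‖x - ξ (s x)‖ ∧ ∀ σ : ℝ, r x = ‖x - ξ σ‖ → σ = s x)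
    (r₀ : ℝ) (hr₀ : 0 < r₀) (hr₀' : r₀ < rt0)
    (hsdiff : ∀ x : EuclideanSpace ℝ (Fin n), r x < r₀ → x ∉ Set.range ξ →
      DifferentiableAt ℝ s x) :
    ∀ x : EuclideanSpace ℝ (Fin n), r x < r₀ → x ∉ Set.range ξ →
      gradient s x
        = (1 - ⟪x - ξ (s x), deriv (deriv ξ) (s x)⟫)⁻¹ • deriv ξ (s x) := by
  intro x hx hxΓ
  have hK0 : (0:ℝ) < K := lt_trans one_pos hK
  have hxr0 : r x < rt0 := hx.trans hr₀'
  obtain ⟨hre, -⟩ := hsdef x hxr0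
  -- differentiability of ξ and deriv ξ
  have hξdiff : Differentiable ℝ ξ := hξC3.differentiable (by norm_num)
  have hξ'diff : Differentiable ℝ (deriv ξ) := by
    have h3 : ContDiff ℝ ((2:ℕ) + 1) ξ := by exact_mod_cast hξC3
    exact ((contDiff_succ_iff_deriv.mp h3).2.2).differentiable (by norm_num)
  -- the denominator is positive
  have hrx_nonneg : (0:ℝ) ≤ r x := by rw [hrdef]; exact Metric.infDist_nonneg
  have hin : |⟪x - ξ (s x), deriv (deriv ξ) (s x)⟫| ≤ r x * K := by
    calc |⟪x - ξ (s x), deriv (deriv ξ) (s x)⟫|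
        ≤ ‖x - ξ (s x)‖ * ‖deriv (deriv ξ) (s x)‖ := abs_real_inner_le_norm _ _
      _ ≤ r x * K := by
          rw [← hre]
          exact mul_le_mul_of_nonneg_left (hξ2 _) hrx_nonneg
  have hrK : r x * K < 1 := by
    have h1 : r x * K < (2*K)⁻¹ * K :=
      mul_lt_mul_of_pos_right (hxr0.trans hrt0') hK0
    have h2 : (2*K)⁻¹ * K = 1/2 := by field_simp
    linarith
  have hcpos : 0 < 1 - ⟪x - ξ (s x), deriv (deriv ξ) (s x)⟫ := by
    have := (abs_le.mp hin).2
    linarith [hrK]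
  set c : ℝ := 1 - ⟪x - ξ (s x), deriv (deriv ξ) (s x)⟫ with hc
  have hcne : c ≠ 0 := ne_of_gt hcpos
  -- orthogonality identity on the tube
  have horth : ∀ y, r y < rt0 → ⟪y - ξ (s y), deriv ξ (s y)⟫ = 0 := by
    intro y hy
    obtain ⟨hye, -⟩ := hsdef y hy
    have hmin : IsLocalMin (fun σ => ⟪y - ξ σ, y - ξ σ⟫) (s y) := by
      apply IsMinOn.isLocalMin _ univ_mem
      intro σ _
      have h1 : ‖y - ξ (s y)‖ ≤ ‖y - ξ σ‖ := by
        rw [← hye, hrdef]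
        have := Metric.infDist_le_dist_of_mem (x := y) (Set.mem_range_self (f := ξ) σ)
        rwa [dist_eq_norm] at this
      simp only [real_inner_self_eq_norm_sq]
      exact pow_le_pow_left₀ (norm_nonneg _) h1 2
    have hd : HasDerivAt (fun σ => y - ξ σ) (-(deriv ξ (s y))) (s y) := by
      simpa using (hξdiff (s y)).hasDerivAt.const_sub y
    have hD : HasDerivAt (fun σ => ⟪y - ξ σ, y - ξ σ⟫)
        (⟪y - ξ (s y), -(deriv ξ (s y))⟫ + ⟪-(deriv ξ (s y)), y - ξ (s y)⟫) (s y) :=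
      hd.inner ℝ hd
    have h0 := hmin.hasDerivAt_eq_zero hD
    rw [inner_neg_left, inner_neg_right, real_inner_comm] at h0
    have hcomm := real_inner_comm (y - ξ (s y)) (deriv ξ (s y))
    linarith
  -- the derivative of s
  have hs' : HasFDerivAt s (fderiv ℝ s x) x := (hsdiff x hx hxΓ).hasFDerivAt
  set L := fderiv ℝ s x with hL
  -- derivative of the inner function F
  have hξs : HasFDerivAt (fun y => ξ (s y))
      ((ContinuousLinearMap.smulRight (1 : ℝ →L[ℝ] ℝ) (deriv ξ (s x))).comp L) x :=
    ((hξdiff (s x)).hasDerivAt.hasFDerivAt).comp x hs'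
  have hξ's : HasFDerivAt (fun y => deriv ξ (s y))
      ((ContinuousLinearMap.smulRight (1 : ℝ →L[ℝ] ℝ) (deriv (deriv ξ) (s x))).comp L) x :=
    ((hξ'diff (s x)).hasDerivAt.hasFDerivAt).comp x hs'
  have h1 : HasFDerivAt (fun y => y - ξ (s y))
      ((ContinuousLinearMap.id ℝ _) -
        (ContinuousLinearMap.smulRight (1 : ℝ →L[ℝ] ℝ) (deriv ξ (s x))).comp L) x :=
    (hasFDerivAt_id x).sub hξs
  have hF : HasFDerivAt (fun y => ⟪y - ξ (s y), deriv ξ (s y)⟫)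
      ((fderivInnerCLM ℝ (x - ξ (s x), deriv ξ (s x))).comp
        (((ContinuousLinearMap.id ℝ _) -
          (ContinuousLinearMap.smulRight (1 : ℝ →L[ℝ] ℝ) (deriv ξ (s x))).comp L).prod
         ((ContinuousLinearMap.smulRight (1 : ℝ →L[ℝ] ℝ) (deriv (deriv ξ) (s x))).comp L))) x :=
    h1.inner ℝ hξ's
  have hUopen : IsOpen {y : EuclideanSpace ℝ (Fin n) | r y < rt0} := by
    have hre : r = fun y => Metric.infDist y (Set.range ξ) := funext hrdef
    rw [hre]
    exact isOpen_lt (Metric.continuous_infDist_pt _) continuous_const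
  have hFev : (fun y => ⟪y - ξ (s y), deriv ξ (s y)⟫) =ᶠ[𝓝 x] (fun _ => (0:ℝ)) := by
    filter_upwards [hUopen.mem_nhds hxr0] with y hy using horth y hy
  have hF0 : HasFDerivAt (fun y => ⟪y - ξ (s y), deriv ξ (s y)⟫)
      (0 : EuclideanSpace ℝ (Fin n) →L[ℝ] ℝ) x :=
    (hasFDerivAt_const (0:ℝ) x).congr_of_eventuallyEq hFev
  have hzero := hF.unique hF0
  -- pointwise identity for L
  have key : ∀ v : EuclideanSpace ℝ (Fin n), L v = ⟪c⁻¹ • deriv ξ (s x), v⟫ := by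
    intro v
    have h := congrArg (fun (T : EuclideanSpace ℝ (Fin n) →L[ℝ] ℝ) => T v) hzero
    simp only [ContinuousLinearMap.comp_apply, ContinuousLinearMap.prod_apply,
      ContinuousLinearMap.sub_apply, ContinuousLinearMap.id_apply,
      ContinuousLinearMap.smulRight_apply, ContinuousLinearMap.one_apply,
      ContinuousLinearMap.zero_apply, fderivInnerCLM_apply] at h
    simp only [real_inner_smul_right, inner_sub_left, real_inner_smul_left,
      real_inner_self_eq_norm_sq, hξ1 (s x)] at h
    simp only [real_inner_smul_left]
    rw [real_inner_comm]
    have hsub : ⟪x - ξ (s x), deriv (deriv ξ) (s x)⟫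
        = ⟪x, deriv (deriv ξ) (s x)⟫ - ⟪ξ (s x), deriv (deriv ξ) (s x)⟫ := inner_sub_left _ _ _
    have hLv : L v * c = ⟪v, deriv ξ (s x)⟫ := by
      rw [hc, hsub]
      ring_nf
      ring_nf at h
      linarith
    rw [← hLv, mul_comm (L v) c, inv_mul_cancel_left₀ hcne]
  -- conclude
  have hgrad : HasGradientAt s (c⁻¹ • deriv ξ (s x)) x := by
    rw [hasGradientAt_iff_hasFDerivAt]
    have : (InnerProductSpace.toDual ℝ (EuclideanSpace ℝ (Fin n)) (c⁻¹ • deriv ξ (s x))) = L := by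
      ext v
      rw [InnerProductSpace.toDual_apply_apply]
      exact (key v).symm
    rw [this]
    exact hs'
  exact hgrad.gradient
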